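/- For every integer p ≥ 3 and every fixed β > β*(p): as β_0 decreases to β*(p) from above, sup_{x∈[−1,1]} H_{β_0,p}(x) → 0 and sup_{x ∈ η_p^{−1}((β,∞))} H_{β_0,p}(x) → 0, so that the Bahadur slope of the maximum pseudolikelihood test, 2[sup_{x∈[−1,1]} H_{β_0,p}(x) − sup_{x ∈ η_p^{−1}((β,∞))} H_{β_0,p}(x)], tends to 0; while the Bahadur slope of the maximum likelihood test, 2[sup_{x∈[−1,1]} H_{β_0,p}(x) − sup_{x ∈ (m_*(β,p),1]} H_{β_0,p}(x)], tends to −2 H_{β*(p),p}(m_*(β,p)), which is strictly positive. -/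

import Mathlib

open Real Set Filter

/-- `I(x) = ½[(1+x)log(1+x) + (1−x)log(1−x)]` (with `Real.log 0 = 0`). -/
noncomputable def bahI (x : ℝ) : ℝ :=
  ((1 + x) * Real.log (1 + x) + (1 - x) * Real.log (1 - x)) / 2

/-- `H_{β,p}(x) = β xᵖ − I(x)`. -/
noncomputable def bahH (β : ℝ) (p : ℕ) (x : ℝ) : ℝ := β * x ^ p - bahI x

/-- `β*(p) = sup {β ≥ 0 : sup_{x∈[−1,1]} H_{β,p}(x) = 0}`. -/
noncomputable def betaStar (p : ℕ) : ℝ :=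
  sSup {β : ℝ | 0 ≤ β ∧ sSup (bahH β p '' Set.Icc (-1 : ℝ) 1) = 0}

/-- inverse hyperbolic tangent. -/
noncomputable def arctanh (x : ℝ) : ℝ := Real.log ((1 + x) / (1 - x)) / 2

/-- `η_p(t) = p⁻¹ t^{1−p} arctanh t` for `t ≠ 0`, and `η_p(0) = 0`. -/
noncomputable def etaFn (p : ℕ) (t : ℝ) : ℝ :=
  if t = 0 then 0 else (p : ℝ)⁻¹ * t ^ (1 - (p : ℤ)) * arctanh t

lemma sub_one_le_mul_log {a : ℝ} (ha : 0 ≤ a) : a - 1 ≤ a * Real.log a := by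
  rcases ha.eq_or_lt with h | h
  · simp [← h]
  · have h2 : Real.log a⁻¹ ≤ a⁻¹ - 1 := Real.log_le_sub_one_of_pos (by positivity)
    rw [Real.log_inv] at h2
    have h3 : 1 - a⁻¹ ≤ Real.log a := by linarith
    have h4 : a * (1 - a⁻¹) ≤ a * Real.log a := by nlinarith
    have h5 : a * (1 - a⁻¹) = a - 1 := by field_simp
    linarith

lemma bahI_nonneg {x : ℝ} (hx : x ∈ Set.Icc (-1:ℝ) 1) : 0 ≤ bahI x := by
  have h1 := sub_one_le_mul_log (a := 1 + x) (by linarith [hx.1])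
  have h2 := sub_one_le_mul_log (a := 1 - x) (by linarith [hx.2])
  unfold bahI; linarith

lemma bahI_le_self {t : ℝ} (h0 : 0 < t) (h1 : t < 1) : bahI t ≤ t := by
  have l1 : Real.log (1 + t) ≤ t := by
    have := Real.log_le_sub_one_of_pos (show (0:ℝ) < 1 + t by linarith); linarith
  have l2 : Real.log (1 - t) ≤ 0 := Real.log_nonpos (by linarith) (by linarith)
  have l1' : (0:ℝ) ≤ Real.log (1 + t) := Real.log_nonneg (by linarith)
  unfold bahI; nlinarith

lemma pow_le_one_of_Icc {x : ℝ} (hx : x ∈ Set.Icc (-1:ℝ) 1) (p : ℕ) : x ^ p ≤ 1 := by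
  calc x ^ p ≤ |x ^ p| := le_abs_self _
  _ = |x| ^ p := abs_pow x p
  _ ≤ 1 := pow_le_one₀ (abs_nonneg x) (abs_le.2 ⟨hx.1, hx.2⟩)

lemma bahH_le {β₀ : ℝ} (hb : 0 ≤ β₀) (p : ℕ) {x : ℝ} (hx : x ∈ Set.Icc (-1:ℝ) 1) :
    bahH β₀ p x ≤ β₀ := by
  have h1 : β₀ * x ^ p ≤ β₀ := mul_le_of_le_one_right hb (pow_le_one_of_Icc hx p)
  have h2 := bahI_nonneg hx
  unfold bahH; linarith

lemma bddAbove_bahH {β₀ : ℝ} (hb : 0 ≤ β₀) (p : ℕ) {s : Set ℝ}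
    (hs : s ⊆ Set.Icc (-1:ℝ) 1) : BddAbove (bahH β₀ p '' s) :=
  ⟨β₀, by rintro y ⟨x, hx, rfl⟩; exact bahH_le hb p (hs hx)⟩

lemma bahH_zero (β₀ : ℝ) {p : ℕ} (hp : p ≠ 0) : bahH β₀ p 0 = 0 := by
  simp [bahH, bahI, hp]

lemma zero_mem_A {p : ℕ} (hp : p ≠ 0) :
    (0:ℝ) ∈ {β : ℝ | 0 ≤ β ∧ sSup (bahH β p '' Set.Icc (-1 : ℝ) 1) = 0} := by
  refine ⟨le_refl 0, le_antisymm ?_ ?_⟩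
  · apply csSup_le (⟨bahH 0 p 0, Set.mem_image_of_mem _ (by norm_num)⟩)
    rintro y ⟨x, hx, rfl⟩
    have := bahI_nonneg hx
    unfold bahH; linarith
  · have := le_csSup (bddAbove_bahH le_rfl p subset_rfl)
      (Set.mem_image_of_mem (bahH 0 p) (show (0:ℝ) ∈ Set.Icc (-1:ℝ) 1 by norm_num))
    rwa [bahH_zero 0 hp] at this

lemma mem_A_le {p : ℕ} {c : ℝ}
    (hc : c ∈ {β : ℝ | 0 ≤ β ∧ sSup (bahH β p '' Set.Icc (-1 : ℝ) 1) = 0})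
    {x : ℝ} (hx : x ∈ Set.Icc (-1:ℝ) 1) : bahH c p x ≤ 0 := by
  have := le_csSup (bddAbove_bahH hc.1 p subset_rfl) (Set.mem_image_of_mem (bahH c p) hx)
  rwa [hc.2] at this

lemma bddAbove_A (p : ℕ) :
    BddAbove {β : ℝ | 0 ≤ β ∧ sSup (bahH β p '' Set.Icc (-1 : ℝ) 1) = 0} := by
  refine ⟨bahI (1/2) * 2 ^ p, fun c hc => ?_⟩
  have h := mem_A_le hc (show (1/2 : ℝ) ∈ Set.Icc (-1:ℝ) 1 by norm_num)
  unfold bahH at h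
  have hpow : ((1:ℝ)/2) ^ p * 2 ^ p = 1 := by
    rw [← mul_pow]; norm_num
  have hpos : (0:ℝ) < ((1:ℝ)/2) ^ p := by positivity
  have h2 : c * ((1/2:ℝ) ^ p) ≤ bahI (1/2) := by linarith
  have h3 : c * (((1/2:ℝ)) ^ p * 2 ^ p) ≤ bahI (1/2) * 2 ^ p := by
    rw [← mul_assoc]
    exact mul_le_mul_of_nonneg_right h2 (by positivity)
  rwa [hpow, mul_one] at h3

lemma betaStar_nonneg (p : ℕ) (hp : p ≠ 0) : 0 ≤ betaStar p :=
  le_csSup (bddAbove_A p) (zero_mem_A hp)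

lemma bahH_betaStar_nonpos (p : ℕ) (hp : p ≠ 0) {x : ℝ} (hx : x ∈ Set.Icc (-1:ℝ) 1) :
    bahH (betaStar p) p x ≤ 0 := by
  have hI := bahI_nonneg hx
  rcases le_or_gt (x ^ p) 0 with h | h
  · have hb := betaStar_nonneg p hp
    unfold bahH; nlinarith
  · have key : betaStar p ≤ bahI x / x ^ p := by
      apply csSup_le ⟨0, zero_mem_A hp⟩
      intro c hc
      have := mem_A_le hc hx
      unfold bahH at this
      rw [le_div_iff₀ h]; linarith
    have := (le_div_iff₀ h).1 key
    unfold bahH; linarith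

lemma sSup_betaStar (p : ℕ) (hp : p ≠ 0) :
    sSup (bahH (betaStar p) p '' Set.Icc (-1:ℝ) 1) = 0 := by
  refine le_antisymm ?_ ?_
  · apply csSup_le ⟨bahH (betaStar p) p 0, Set.mem_image_of_mem _ (by norm_num)⟩
    rintro y ⟨x, hx, rfl⟩
    exact bahH_betaStar_nonpos p hp hx
  · have := le_csSup (bddAbove_bahH (betaStar_nonneg p hp) p subset_rfl)
      (Set.mem_image_of_mem (bahH (betaStar p) p) (show (0:ℝ) ∈ Set.Icc (-1:ℝ) 1 by norm_num))
    rwa [bahH_zero _ hp] at this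

lemma arctanh_eq {x : ℝ} (h1 : -1 < x) (h2 : x < 1) :
    arctanh x = (Real.log (1 + x) - Real.log (1 - x)) / 2 := by
  unfold arctanh
  rw [Real.log_div (by linarith) (by linarith)]

lemma le_arctanh {t : ℝ} (h0 : 0 ≤ t) (h1 : t < 1) : t / 2 ≤ arctanh t := by
  rw [arctanh_eq (by linarith) h1]
  have l1 : (0:ℝ) ≤ Real.log (1 + t) := Real.log_nonneg (by linarith)
  have l2 : Real.log (1 - t) ≤ -t := by
    have := Real.log_le_sub_one_of_pos (show (0:ℝ) < 1 - t by linarith); linarith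
  linarith

lemma hasDerivAt_bahI {x : ℝ} (h1 : -1 < x) (h2 : x < 1) :
    HasDerivAt bahI (arctanh x) x := by
  have hp1 : (0:ℝ) < 1 + x := by linarith
  have hp2 : (0:ℝ) < 1 - x := by linarith
  have d1 : HasDerivAt (fun y : ℝ => 1 + y) 1 x := by
    simpa using (hasDerivAt_id x).const_add (1:ℝ)
  have d2 : HasDerivAt (fun y : ℝ => 1 - y) (-1) x := by
    exact (hasDerivAt_id' x).const_sub (1:ℝ)
  have l1 : HasDerivAt (fun y : ℝ => Real.log (1 + y)) (1 / (1 + x)) x := by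
    simpa using d1.log hp1.ne'
  have l2 : HasDerivAt (fun y : ℝ => Real.log (1 - y)) (-1 / (1 - x)) x := by
    simpa using d2.log hp2.ne'
  have m1 := d1.mul l1
  have m2 := d2.mul l2
  have sum := (m1.add m2).div_const 2
  have : HasDerivAt bahI
      ((1 * Real.log (1 + x) + (1 + x) * (1 / (1 + x)) +
        (-1 * Real.log (1 - x) + (1 - x) * (-1 / (1 - x)))) / 2) x := by
    unfold bahI; exact sum
  convert this using 1
  rw [arctanh_eq h1 h2]
  field_simp
  ring

lemma hasDerivAt_bahH (β₀ : ℝ) (p : ℕ) {x : ℝ} (h1 : -1 < x) (h2 : x < 1) :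
    HasDerivAt (bahH β₀ p) (β₀ * ((p : ℝ) * x ^ (p - 1)) - arctanh x) x := by
  have hpow := (hasDerivAt_pow p x).const_mul β₀
  have := hpow.sub (hasDerivAt_bahI h1 h2)
  unfold bahH
  exact this

lemma stationary {β₀ : ℝ} {p : ℕ} {m : ℝ} (h0 : 0 < m) (h1 : m < 1)
    (hmax : IsMaxOn (bahH β₀ p) (Set.Icc (-1:ℝ) 1) m) :
    β₀ * ((p : ℝ) * m ^ (p - 1)) = arctanh m := by
  have hloc : IsLocalMax (bahH β₀ p) m :=
    hmax.isLocalMax (Icc_mem_nhds (by linarith) (by linarith))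
  have := hloc.hasDerivAt_eq_zero (hasDerivAt_bahH β₀ p (by linarith) h1)
  linarith

lemma max_ne_one {β₀ : ℝ} (hb : 0 ≤ β₀) {p : ℕ}
    (hmax : IsMaxOn (bahH β₀ p) (Set.Icc (-1:ℝ) 1) 1) : False := by
  set ε := Real.exp (-(2 * β₀ * p + 1)) with hεdef
  have hε0 : 0 < ε := Real.exp_pos _
  have hbp : (0:ℝ) ≤ β₀ * p := by positivity
  have hε1 : ε < 1 := by
    rw [hεdef, Real.exp_lt_one_iff]
    nlinarith
  have hx : (1 - ε) ∈ Set.Icc (-1:ℝ) 1 := ⟨by linarith, by linarith⟩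
  have hle := hmax hx
  simp only [Set.mem_setOf_eq] at hle
  have hI1 : bahI 1 = Real.log 2 := by
    unfold bahI; norm_num
  have hlogε : Real.log ε = -(2 * β₀ * p + 1) := Real.log_exp _
  have hbern : 1 - (p:ℝ) * ε ≤ (1 - ε) ^ p := by
    have h := one_add_mul_le_pow (show (-2:ℝ) ≤ -ε by linarith) p
    calc 1 - (p:ℝ) * ε = 1 + (p:ℝ) * (-ε) := by ring
    _ ≤ (1 + -ε) ^ p := h
    _ = (1 - ε) ^ p := by ring_nf
  have hIbound : bahI (1 - ε) ≤ Real.log 2 - ε * (2 * β₀ * p + 1) / 2 := by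
    unfold bahI
    have e1 : (1:ℝ) + (1 - ε) = 2 - ε := by ring
    have e2 : (1:ℝ) - (1 - ε) = ε := by ring
    rw [e1, e2, hlogε]
    have hA : Real.log (2 - ε) ≤ Real.log 2 := Real.log_le_log (by linarith) (by linarith)
    have hB : 0 ≤ Real.log (2 - ε) := Real.log_nonneg (by linarith)
    nlinarith
  have hH1 : bahH β₀ p 1 = β₀ - Real.log 2 := by
    unfold bahH; rw [one_pow, hI1]; ring
  have hHx : β₀ * (1 - ε) ^ p - bahI (1 - ε) ≤ β₀ - Real.log 2 := by
    rw [← hH1]; exact hle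
  have hb1 : β₀ * (1 - (p:ℝ) * ε) ≤ β₀ * (1 - ε) ^ p :=
    mul_le_mul_of_nonneg_left hbern hb
  nlinarith

lemma exists_small_mem (p : ℕ) (hp : 3 ≤ p) {β : ℝ} (hβ0 : 0 < β) {δ : ℝ} (hδ : 0 < δ) :
    ∃ t : ℝ, t ∈ {t ∈ Set.Icc (-1:ℝ) 1 | β < etaFn p t} ∧ 0 < t ∧ t ≤ δ ∧ t ≤ 1/2 := by
  have hp0 : (0:ℝ) < p := by
    have : (3:ℝ) ≤ p := by exact_mod_cast hp
    linarith
  have hden : (0:ℝ) < 2 * p * (β + 1) := by positivity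
  set t := min (min δ (1/2)) (1 / (2 * p * (β + 1))) with htdef
  have ht0 : 0 < t := lt_min (lt_min hδ (by norm_num)) (by positivity)
  have htδ : t ≤ δ := le_trans (min_le_left _ _) (min_le_left _ _)
  have ht2 : t ≤ 1/2 := le_trans (min_le_left _ _) (min_le_right _ _)
  have htb : t ≤ 1 / (2 * p * (β + 1)) := min_le_right _ _
  have ht1 : t < 1 := by linarith
  have hne : t ≠ 0 := ne_of_gt ht0
  refine ⟨t, ⟨⟨by linarith, by linarith⟩, ?_⟩, ht0, htδ, ht2⟩
  rw [etaFn, if_neg hne]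
  have hz : t ^ (1 - (p : ℤ)) = t / t ^ p := by
    rw [zpow_sub₀ hne, zpow_one, zpow_natCast]
  rw [hz]
  have hpow_pos : 0 < t ^ p := pow_pos ht0 p
  have hrw : (p : ℝ)⁻¹ * (t / t ^ p) * arctanh t = (t * arctanh t) / ((p : ℝ) * t ^ p) := by
    field_simp
  rw [hrw, lt_div_iff₀ (by positivity)]
  -- goal : β * ((p:ℝ) * t ^ p) < t * arctanh t
  have hat : t / 2 ≤ arctanh t := le_arctanh ht0.le ht1
  have h2 : t ^ p = t ^ (p - 2) * t ^ 2 := by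
    rw [← pow_add]; congr 1; omega
  have h1 : t ^ (p - 2) ≤ t := by
    calc t ^ (p - 2) ≤ t ^ 1 := pow_le_pow_of_le_one ht0.le ht1.le (by omega)
    _ = t := pow_one t
  have htb' : t * (2 * p * (β + 1)) ≤ 1 := (le_div_iff₀ hden).1 htb
  have c1 : β * ((p:ℝ) * t ^ p) = (β * p) * (t ^ (p - 2) * t ^ 2) := by rw [h2]; ring
  have c2 : (β * (p:ℝ)) * (t ^ (p - 2) * t ^ 2) ≤ (β * p) * (t * t ^ 2) := by
    apply mul_le_mul_of_nonneg_left _ (by positivity)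
    exact mul_le_mul_of_nonneg_right h1 (sq_nonneg t)
  have hβpt : β * (p:ℝ) * t < 1/2 := by nlinarith
  have c3 : (β * (p:ℝ)) * (t * t ^ 2) < (1/2) * t ^ 2 := by
    have := mul_lt_mul_of_pos_right hβpt (show (0:ℝ) < t ^ 2 by positivity)
    nlinarith
  have c4 : (1/2) * t ^ 2 ≤ t * arctanh t := by nlinarith
  linarith

/-- For `p ≥ 3` and a fixed `β > β*(p)` with positive global maximizer `m = m_*(β,p)` of
`H_{β,p}` on `[−1,1]`: as `β₀ ↓ β*(p)`, `sup_{[−1,1]} H_{β₀,p} → 0` and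
`sup_{η_p⁻¹((β,∞))} H_{β₀,p} → 0`, hence the MPL Bahadur slope
`2[sup_{[−1,1]} H_{β₀,p} − sup_{η_p⁻¹((β,∞))} H_{β₀,p}]` tends to `0`, while the ML
Bahadur slope `2[sup_{[−1,1]} H_{β₀,p} − sup_{(m,1]} H_{β₀,p}]` tends to
`−2 H_{β*(p),p}(m)`, which is strictly positive. -/
theorem statement12 (p : ℕ) (hp : 3 ≤ p) (β : ℝ) (hβ : betaStar p < β)
    (m : ℝ) (hm0 : 0 < m) (hm1 : m ∈ Set.Icc (-1 : ℝ) 1)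
    (hmax : IsMaxOn (bahH β p) (Set.Icc (-1 : ℝ) 1) m) :
    Tendsto (fun β₀ => sSup (bahH β₀ p '' Set.Icc (-1 : ℝ) 1))
      (nhdsWithin (betaStar p) (Set.Ioi (betaStar p))) (nhds 0) ∧
    Tendsto (fun β₀ => sSup (bahH β₀ p '' {t ∈ Set.Icc (-1 : ℝ) 1 | β < etaFn p t}))
      (nhdsWithin (betaStar p) (Set.Ioi (betaStar p))) (nhds 0) ∧
    Tendsto (fun β₀ => 2 * (sSup (bahH β₀ p '' Set.Icc (-1 : ℝ) 1)
        - sSup (bahH β₀ p '' {t ∈ Set.Icc (-1 : ℝ) 1 | β < etaFn p t})))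
      (nhdsWithin (betaStar p) (Set.Ioi (betaStar p))) (nhds 0) ∧
    Tendsto (fun β₀ => 2 * (sSup (bahH β₀ p '' Set.Icc (-1 : ℝ) 1)
        - sSup (bahH β₀ p '' Set.Ioc m 1)))
      (nhdsWithin (betaStar p) (Set.Ioi (betaStar p)))
      (nhds (-2 * bahH (betaStar p) p m)) ∧
    0 < -2 * bahH (betaStar p) p m := by
  have hpne : p ≠ 0 := by omega
  have hbs0 : 0 ≤ betaStar p := betaStar_nonneg p hpne
  have hβ0 : 0 < β := lt_of_le_of_lt hbs0 hβ
  set l := nhdsWithin (betaStar p) (Set.Ioi (betaStar p)) with hldef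
  -- m < 1
  have hm1' : m < 1 := by
    rcases lt_or_eq_of_le hm1.2 with h | h
    · exact h
    · exact absurd (h ▸ hmax) (fun hh => max_ne_one hβ0.le hh)
  -- pointwise upper bound
  have hptw : ∀ β₀, betaStar p ≤ β₀ → ∀ x ∈ Set.Icc (-1:ℝ) 1,
      bahH β₀ p x ≤ β₀ - betaStar p := by
    intro β₀ hb x hx
    have h1 := bahH_betaStar_nonpos p hpne hx
    have h2 : (β₀ - betaStar p) * x ^ p ≤ β₀ - betaStar p :=
      mul_le_of_le_one_right (by linarith) (pow_le_one_of_Icc hx p)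
    have h3 : bahH β₀ p x = (β₀ - betaStar p) * x ^ p + bahH (betaStar p) p x := by
      unfold bahH; ring
    linarith
  have h0Icc : (0:ℝ) ∈ Set.Icc (-1:ℝ) 1 := by norm_num
  have hF_ub : ∀ β₀ ∈ Set.Ioi (betaStar p),
      sSup (bahH β₀ p '' Set.Icc (-1:ℝ) 1) ≤ β₀ - betaStar p := by
    intro β₀ hb
    apply csSup_le ⟨bahH β₀ p 0, Set.mem_image_of_mem _ h0Icc⟩
    rintro y ⟨x, hx, rfl⟩
    exact hptw β₀ (le_of_lt hb) x hx
  have hF_lb : ∀ β₀ ∈ Set.Ioi (betaStar p),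
      0 ≤ sSup (bahH β₀ p '' Set.Icc (-1:ℝ) 1) := by
    intro β₀ hb
    have := le_csSup (bddAbove_bahH (le_trans hbs0 (le_of_lt hb)) p subset_rfl)
      (Set.mem_image_of_mem (bahH β₀ p) h0Icc)
    rwa [bahH_zero β₀ hpne] at this
  have hsub : Tendsto (fun β₀ : ℝ => β₀ - betaStar p) l (nhds 0) := by
    have h : Tendsto (fun β₀ : ℝ => β₀ - betaStar p) (nhds (betaStar p))
        (nhds (betaStar p - betaStar p)) := tendsto_id.sub tendsto_const_nhds
    rw [sub_self] at h
    exact h.mono_left nhdsWithin_le_nhds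
  have T1 : Tendsto (fun β₀ => sSup (bahH β₀ p '' Set.Icc (-1 : ℝ) 1)) l (nhds 0) := by
    apply tendsto_of_tendsto_of_tendsto_of_le_of_le' tendsto_const_nhds hsub
    · exact eventually_mem_nhdsWithin.mono hF_lb
    · exact eventually_mem_nhdsWithin.mono hF_ub
  -- set S
  have hSsub : {t ∈ Set.Icc (-1:ℝ) 1 | β < etaFn p t} ⊆ Set.Icc (-1:ℝ) 1 :=
    fun t ht => ht.1
  obtain ⟨t₁, ht₁S, _, _, _⟩ := exists_small_mem p hp hβ0 (δ := 1) one_pos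
  have hSne : ∀ β₀ : ℝ, (bahH β₀ p '' {t ∈ Set.Icc (-1:ℝ) 1 | β < etaFn p t}).Nonempty :=
    fun β₀ => ⟨bahH β₀ p t₁, Set.mem_image_of_mem _ ht₁S⟩
  have hG_ub : ∀ β₀ ∈ Set.Ioi (betaStar p),
      sSup (bahH β₀ p '' {t ∈ Set.Icc (-1:ℝ) 1 | β < etaFn p t}) ≤ β₀ - betaStar p := by
    intro β₀ hb
    apply csSup_le (hSne β₀)
    rintro y ⟨x, hx, rfl⟩
    exact hptw β₀ (le_of_lt hb) x (hSsub hx)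
  have T2 : Tendsto (fun β₀ => sSup (bahH β₀ p '' {t ∈ Set.Icc (-1 : ℝ) 1 | β < etaFn p t}))
      l (nhds 0) := by
    rw [tendsto_order]
    constructor
    · intro a ha
      obtain ⟨t, htS, ht0, htδ, ht2⟩ := exists_small_mem p hp hβ0 (δ := -a/2) (by linarith)
      apply eventually_of_mem (self_mem_nhdsWithin)
      intro β₀ hb
      have hbb : 0 ≤ β₀ := le_trans hbs0 (le_of_lt hb)
      have hle := le_csSup (bddAbove_bahH hbb p hSsub) (Set.mem_image_of_mem (bahH β₀ p) htS)
      have hI := bahI_le_self ht0 (by linarith)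
      have hpw : 0 ≤ β₀ * t ^ p := by positivity
      have : -t ≤ bahH β₀ p t := by unfold bahH; linarith
      linarith
    · intro b hb
      have hev : ∀ᶠ β₀ in l, β₀ < betaStar p + b :=
        (tendsto_id.mono_left nhdsWithin_le_nhds).eventually_lt_const (by linarith)
      filter_upwards [hev, eventually_mem_nhdsWithin] with β₀ h1 h2
      have := hG_ub β₀ h2
      linarith
  have T3 : Tendsto (fun β₀ => 2 * (sSup (bahH β₀ p '' Set.Icc (-1 : ℝ) 1)
      - sSup (bahH β₀ p '' {t ∈ Set.Icc (-1 : ℝ) 1 | β < etaFn p t}))) l (nhds 0) := by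
    have h := (T1.sub T2).const_mul (2:ℝ)
    simpa using h
  -- K : sup over Ioc m 1
  have hIocsub : Set.Ioc m 1 ⊆ Set.Icc (-1:ℝ) 1 :=
    fun x hx => ⟨by linarith [hx.1], hx.2⟩
  have hIocne : (Set.Ioc m 1).Nonempty := nonempty_Ioc.2 hm1'
  have hK_ub : ∀ β₀, betaStar p ≤ β₀ → β₀ ≤ β →
      sSup (bahH β₀ p '' Set.Ioc m 1) ≤ bahH β₀ p m := by
    intro β₀ h1 h2
    apply csSup_le (hIocne.image _)
    rintro y ⟨x, hx, rfl⟩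
    have hxIcc : x ∈ Set.Icc (-1:ℝ) 1 := hIocsub hx
    have h3 := hmax hxIcc
    simp only [Set.mem_setOf_eq] at h3
    have h4 : m ^ p ≤ x ^ p := pow_le_pow_left₀ hm0.le hx.1.le p
    have h5 : 0 ≤ (β - β₀) * (x ^ p - m ^ p) :=
      mul_nonneg (by linarith) (by linarith)
    unfold bahH at *
    nlinarith
  have hcont : ContinuousAt (bahH (betaStar p) p) m :=
    (hasDerivAt_bahH (betaStar p) p (by linarith) hm1').continuousAt
  have TK : Tendsto (fun β₀ => sSup (bahH β₀ p '' Set.Ioc m 1)) l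
      (nhds (bahH (betaStar p) p m)) := by
    rw [tendsto_order]
    constructor
    · intro a ha
      have hev : ∀ᶠ x in nhds m, a < bahH (betaStar p) p x :=
        hcont.eventually_const_lt ha
      have hev2 : ∀ᶠ x in nhdsWithin m (Set.Ioi m), a < bahH (betaStar p) p x :=
        hev.filter_mono nhdsWithin_le_nhds
      have hmem : Set.Ioc m 1 ∈ nhdsWithin m (Set.Ioi m) :=
        Ioc_mem_nhdsGT_of_mem ⟨le_refl m, hm1'⟩
      obtain ⟨x₀, hx₀a, hx₀mem⟩ :=
        (hev2.and (eventually_of_mem hmem (fun x hx => hx))).exists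
      apply eventually_of_mem self_mem_nhdsWithin
      intro β₀ hb
      have hbb : 0 ≤ β₀ := le_trans hbs0 (le_of_lt hb)
      have hx0pos : 0 < x₀ := lt_trans hm0 hx₀mem.1
      have hstep : bahH (betaStar p) p x₀ ≤ bahH β₀ p x₀ := by
        have : 0 ≤ (β₀ - betaStar p) * x₀ ^ p :=
          mul_nonneg (by linarith [Set.mem_Ioi.1 hb]) (pow_pos hx0pos p).le
        unfold bahH; nlinarith
      have := le_csSup (bddAbove_bahH hbb p hIocsub)
        (Set.mem_image_of_mem (bahH β₀ p) hx₀mem)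
      linarith
    · intro b hb
      have hmin : betaStar p < min β (betaStar p + (b - bahH (betaStar p) p m)) :=
        lt_min hβ (by linarith)
      have hev : ∀ᶠ β₀ in l, β₀ < min β (betaStar p + (b - bahH (betaStar p) p m)) :=
        (tendsto_id.mono_left nhdsWithin_le_nhds).eventually_lt_const hmin
      filter_upwards [hev, eventually_mem_nhdsWithin] with β₀ h1 h2
      have hβ₀β : β₀ ≤ β := le_of_lt (lt_of_lt_of_le h1 (min_le_left _ _))
      have hK := hK_ub β₀ (le_of_lt h2) hβ₀β
      have hmp : m ^ p ≤ 1 := pow_le_one_of_Icc hm1 p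
      have hmp0 : 0 ≤ m ^ p := (pow_pos hm0 p).le
      have hb2 : (β₀ - betaStar p) * m ^ p ≤ β₀ - betaStar p :=
        mul_le_of_le_one_right (by linarith [Set.mem_Ioi.1 h2]) hmp
      have heq : bahH β₀ p m = bahH (betaStar p) p m + (β₀ - betaStar p) * m ^ p := by
        unfold bahH; ring
      have hlt : β₀ - betaStar p < b - bahH (betaStar p) p m := by
        have := lt_of_lt_of_le h1 (min_le_right _ _); linarith
      linarith
  have T4 : Tendsto (fun β₀ => 2 * (sSup (bahH β₀ p '' Set.Icc (-1 : ℝ) 1)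
      - sSup (bahH β₀ p '' Set.Ioc m 1))) l (nhds (-2 * bahH (betaStar p) p m)) := by
    have h := (T1.sub TK).const_mul (2:ℝ)
    have heq : (2:ℝ) * (0 - bahH (betaStar p) p m) = -2 * bahH (betaStar p) p m := by ring
    rwa [heq] at h
  -- strict negativity
  have hle0 : bahH (betaStar p) p m ≤ 0 := bahH_betaStar_nonpos p hpne hm1
  have hne0 : bahH (betaStar p) p m ≠ 0 := by
    intro heq
    have hmaxstar : IsMaxOn (bahH (betaStar p) p) (Set.Icc (-1:ℝ) 1) m := by
      apply isMaxOn_iff.2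
      intro x hx
      rw [heq]
      exact bahH_betaStar_nonpos p hpne hx
    have s1 := stationary hm0 hm1' hmax
    have s2 := stationary hm0 hm1' hmaxstar
    have hppos : (0:ℝ) < (p:ℝ) * m ^ (p - 1) := by
      have : (0:ℝ) < (p:ℝ) := by exact_mod_cast Nat.pos_of_ne_zero hpne
      positivity
    have : β = betaStar p := mul_right_cancel₀ (ne_of_gt hppos) (s1.trans s2.symm)
    linarith
  exact ⟨T1, T2, T3, T4, by
    have := lt_of_le_of_ne hle0 hne0
    linarith⟩
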